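/- Let n ≥ 2 be an integer and C ∈ (0, π/2). Let v : (C, π−C) → ℝ be a differentiable function whose derivative is v'(x) = ((sin x / sin C)^{2(n−1)} − 1)^{−1/2} for all x ∈ (C, π−C). Then v is twice differentiable and satisfies the minimal-hypersurface equation v''(x)/(1 + v'(x)²) + (n−1)·(cos x / sin x)·v'(x) = 0 for all x ∈ (C, π−C). -/

import Mathlib

open Real Set

lemma sin_lt_sin_of_mem (C x : ℝ) (hC : C ∈ Set.Ioo 0 (π / 2))
    (hx : x ∈ Set.Ioo C (π - C)) : Real.sin C < Real.sin x := by
  obtain ⟨hC0, hC2⟩ := hC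
  obtain ⟨hx1, hx2⟩ := hx
  have hpi := Real.pi_pos
  rcases le_or_gt x (π / 2) with h | h
  · exact Real.strictMonoOn_sin ⟨by linarith, by linarith⟩ ⟨by linarith, h⟩ hx1
  · have : Real.sin x = Real.sin (π - x) := (Real.sin_pi_sub x).symm
    rw [this]
    exact Real.strictMonoOn_sin ⟨by linarith, by linarith⟩ ⟨by linarith, by linarith⟩
      (by linarith)

theorem spherical_catenoid_horizontal_minimal
    (n : ℕ) (hn : 2 ≤ n) (C : ℝ) (hC : C ∈ Set.Ioo 0 (π / 2))
    (v : ℝ → ℝ)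
    (hv : ∀ x ∈ Set.Ioo C (π - C),
      HasDerivAt v (((Real.sin x / Real.sin C) ^ (2 * (n - 1)) - 1) ^ (-(1 : ℝ) / 2)) x) :
    ∀ x ∈ Set.Ioo C (π - C),
      DifferentiableAt ℝ (deriv v) x ∧
      deriv (deriv v) x / (1 + (deriv v x) ^ 2)
        + ((n : ℝ) - 1) * (Real.cos x / Real.sin x) * deriv v x = 0 := by
  intro x hx
  obtain ⟨hC0, hC2⟩ := hC
  have hpi := Real.pi_pos
  set m := 2 * (n - 1) with hm
  have hm2 : 2 ≤ m := by omega
  -- basic positivity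
  have hsC : 0 < Real.sin C := Real.sin_pos_of_pos_of_lt_pi hC0 (by linarith [hx.1, hx.2])
  have hs : 0 < Real.sin x := Real.sin_pos_of_pos_of_lt_pi (by linarith [hx.1]) (by linarith [hx.2])
  -- define w, the claimed derivative function
  set w : ℝ → ℝ := fun y => ((Real.sin y / Real.sin C) ^ m - 1) ^ (-(1 : ℝ) / 2) with hw
  -- derivative of u on a neighborhood: we only need at points of the interval
  have key : ∀ y ∈ Set.Ioo C (π - C), HasDerivAt w
      ((-(1 : ℝ)/2) * ((Real.sin y / Real.sin C) ^ m - 1) ^ (-(1:ℝ)/2 - 1) *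
        ((m : ℝ) * (Real.sin y / Real.sin C) ^ (m - 1) * (Real.cos y / Real.sin C))) y := by
    intro y hy
    have hsy : Real.sin C < Real.sin y := sin_lt_sin_of_mem C y ⟨hC0, hC2⟩ hy
    have hr1 : 1 < (Real.sin y / Real.sin C) ^ m :=
      one_lt_pow₀ ((one_lt_div hsC).mpr hsy) (by omega)
    have hu0 : (Real.sin y / Real.sin C) ^ m - 1 ≠ 0 := by linarith
    have h1 : HasDerivAt (fun z => (Real.sin z / Real.sin C) ^ m - 1)
        ((m : ℝ) * (Real.sin y / Real.sin C) ^ (m - 1) * (Real.cos y / Real.sin C)) y := by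
      have := (((Real.hasDerivAt_sin y).div_const (Real.sin C)).pow m).sub_const 1
      exact this
    have h2 := h1.rpow_const (p := (-(1:ℝ)/2)) (Or.inl hu0)
    convert h2 using 1
    ring
  -- deriv v agrees with w near x
  have heq : deriv v =ᶠ[nhds x] w :=
    Filter.eventuallyEq_of_mem (isOpen_Ioo.mem_nhds hx) (fun y hy => (hv y hy).deriv)
  have hwx := key x hx
  constructor
  · exact hwx.differentiableAt.congr_of_eventuallyEq heq
  · have hdv : deriv v x = w x := (hv x hx).deriv
    have hddv : deriv (deriv v) x =
        (-(1 : ℝ)/2) * ((Real.sin x / Real.sin C) ^ m - 1) ^ (-(1:ℝ)/2 - 1) *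
          ((m : ℝ) * (Real.sin x / Real.sin C) ^ (m - 1) * (Real.cos x / Real.sin C)) :=
      heq.deriv_eq.trans hwx.deriv
    rw [hddv, hdv]
    -- algebra
    set s := Real.sin x
    set c := Real.cos x
    have hsy : Real.sin C < s := sin_lt_sin_of_mem C x ⟨hC0, hC2⟩ hx
    set t := (s / Real.sin C) ^ (m - 1) with ht
    have hrt : (s / Real.sin C) ^ m = t * (s / Real.sin C) := by
      rw [ht, ← pow_succ]
      congr 1
      omega
    have hr1 : 1 < (s / Real.sin C) ^ m := one_lt_pow₀ ((one_lt_div hsC).mpr hsy) (by omega)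
    set u := (s / Real.sin C) ^ m - 1 with hu
    have hu0 : 0 < u := by rw [hu]; linarith
    set a := u ^ (-(1:ℝ)/2) with ha
    have ha0 : 0 < a := Real.rpow_pos_of_pos hu0 _
    have ha2 : a ^ 2 = u⁻¹ := by
      rw [ha, ← Real.rpow_natCast (u ^ (-(1:ℝ)/2)) 2, ← Real.rpow_mul hu0.le]
      norm_num [Real.rpow_neg_one]
    have hsplit : u ^ (-(1:ℝ)/2 - 1) = a / u := by
      rw [ha, Real.rpow_sub hu0, Real.rpow_one]
    have hmc : (m : ℝ) = 2 * ((n : ℝ) - 1) := by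
      rw [hm]
      push_cast [Nat.cast_sub (by omega : 1 ≤ n)]
      ring
    rw [hw]
    simp only []
    rw [← hu, ← ha, hsplit, ha2, hmc]
    have h1u : 1 + u⁻¹ = (u + 1) / u := by field_simp
    rw [h1u]
    have hu1 : u + 1 = t * (s / Real.sin C) := by rw [hu]; linarith [hrt]
    rw [hu1]
    have hsC' : Real.sin C ≠ 0 := ne_of_gt hsC
    have hs' : s ≠ 0 := ne_of_gt hs
    have hu' : u ≠ 0 := ne_of_gt hu0
    have ht0 : t ≠ 0 := by
      rw [ht]; positivity
    field_simp
    ring
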